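/- Fix x₀ ∈ X and T > 0. Let x : [0,T] → X solve the canonical equation of adaptive dynamics dx(t)/dt = Σ_{h=1}^{A} h²·m(x(t))·z̄(x(t))·g(x(t))·M(x(t),h) with x(0) = x₀, and let x₁, x₂ : [0,T] → X solve, with x₁(0) = x₂(0) = x₀, the ODEs dx₁(t)/dt = [ z̄(x₁(t))·b(x₁(t))·m(x₁(t))·p₁^ε(x₁(t)) − C^a_Lip·η ] · Σ_{h=1}^{A} h·r̄₁^{ε,η}(x₁(t),h) and dx₂(t)/dt = [ z̄(x₂(t))·b(x₂(t))·m(x₂(t))·p₂^ε(x₂(t)) + C^a_Lip·η ] · Σ_{h=1}^{A} h·r̄₂^{ε,η}(x₂(t),h). Then there exists a constant C, depending only on A, θ, m₀, the Lipschitz constants and the upper and positive lower bounds of b, d, c, m, M, g, and on C¹_B, C²_B, C^r_Lip, C^a_Lip — but not on x₀, T, ε, η — such that sup_{t∈[0,T]} |x_j(t) − x(t)| ≤ C·T·e^{C·T}·(η + ε) for j = 1, 2. -/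

import Mathlib

open Set

/-- The data and standing assumptions of Lemma 8.2 of the paper (comparison of the
approximating trait-substitution dynamics with the canonical equation of adaptive
dynamics).  The trait space is the compact interval `X = [xl, xu]`;  `b, d` are the
birth and death rates, `m` the mutation probability, `c` the competition kernel,
`g x = ∂₁f(x,x)` the fitness gradient (where `f(y,x) = b y − d y − c y x·z̄ x` is the
invasion fitness and `z̄ x = (b x − d x)/c x x` the equilibrium density), `M x h` the
mutation law on `{1,…,A}`, and `C1B, C2B, ε0, CrLip, CaLip` the constants from the
construction of the approximating Markov jump processes. -/
structure CEADSetup where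
  xl : ℝ
  xu : ℝ
  hX : xl ≤ xu
  A : ℕ
  hA : 1 ≤ A
  b : ℝ → ℝ
  d : ℝ → ℝ
  m : ℝ → ℝ
  c : ℝ → ℝ → ℝ
  g : ℝ → ℝ
  M : ℝ → ℕ → ℝ
  θ : ℝ
  m0 : ℝ
  C1B : ℝ
  C2B : ℝ
  ε0 : ℝ
  CrLip : NNReal
  CaLip : NNReal
  Lb : NNReal
  Ld : NNReal
  Lm : NNReal
  Lc : NNReal
  Lg : NNReal
  LM : NNReal
  hθ : 0 < θ
  hm0 : 0 < m0
  hC1B : 0 < C1B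
  hC2B : 0 < C2B
  hε0 : 0 < ε0
  hbpos : ∀ x ∈ Set.Icc xl xu, 0 < b x
  hdpos : ∀ x ∈ Set.Icc xl xu, 0 < d x
  hbd : ∀ x ∈ Set.Icc xl xu, 0 < b x - d x
  hm : ∀ x ∈ Set.Icc xl xu, m x ∈ Set.Ioc (0 : ℝ) 1
  hcpos : ∀ x ∈ Set.Icc xl xu, ∀ y ∈ Set.Icc xl xu, 0 < c x y
  hLb : LipschitzOnWith Lb b (Set.Icc xl xu)
  hLd : LipschitzOnWith Ld d (Set.Icc xl xu)
  hLm : LipschitzOnWith Lm m (Set.Icc xl xu)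
  hLc : LipschitzOnWith Lc (fun p : ℝ × ℝ => c p.1 p.2)
    (Set.Icc xl xu ×ˢ Set.Icc xl xu)
  hLg : LipschitzOnWith Lg g (Set.Icc xl xu)
  /-- `g` is the fitness gradient `x ↦ ∂₁ f (x,x)` of the invasion fitness
  `f(y,x) = b y − d y − c y x · z̄ x`. -/
  hgdef : ∀ x ∈ Set.Icc xl xu,
    g x = deriv (fun y => b y - d y - c y x * ((b x - d x) / c x x)) x
  hgθ : ∀ x ∈ Set.Icc xl xu, θ ≤ g x
  hMnn : ∀ x ∈ Set.Icc xl xu, ∀ h : ℕ, 0 ≤ M x h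
  hLM : ∀ h : ℕ, 1 ≤ h → h ≤ A →
    LipschitzOnWith LM (fun x => M x h) (Set.Icc xl xu)
  hMm0 : ∀ x ∈ Set.Icc xl xu, m0 ≤ ∑ h ∈ Finset.Icc 1 A, M x h
  /-- `ε0` is small enough that `q₁^ε(x,h) > 0` for all `ε ∈ (0, ε0]`. -/
  hq1pos : ∀ x ∈ Set.Icc xl xu, ∀ h : ℕ, 1 ≤ h → h ≤ A →
    0 < (h : ℝ) * g x / b x - C1B * ε0

namespace CEADSetup

variable (S : CEADSetup)

/-- The trait space `X = [xl, xu]`. -/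
def Xset : Set ℝ := Set.Icc S.xl S.xu

/-- The equilibrium density `z̄ x = (b x − d x)/c x x`. -/
noncomputable def zbar (x : ℝ) : ℝ := (S.b x - S.d x) / S.c x x

/-- `q₁^ε(x,h) = h·g(x)/b(x) − C¹_B·ε`. -/
noncomputable def q1 (ε x : ℝ) (h : ℕ) : ℝ := (h : ℝ) * S.g x / S.b x - S.C1B * ε

/-- `q₂^ε(x,h) = h·g(x)/b(x) + C²_B·ε`. -/
noncomputable def q2 (ε x : ℝ) (h : ℕ) : ℝ := (h : ℝ) * S.g x / S.b x + S.C2B * ε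

/-- `p₁^ε(x) = Σ_{h=1}^{A} q₁^ε(x,h)·M(x,h)`. -/
noncomputable def p1 (ε x : ℝ) : ℝ := ∑ h ∈ Finset.Icc 1 S.A, S.q1 ε x h * S.M x h

/-- `p₂^ε(x) = Σ_{h=1}^{A} q₂^ε(x,h)·M(x,h)`. -/
noncomputable def p2 (ε x : ℝ) : ℝ := ∑ h ∈ Finset.Icc 1 S.A, S.q2 ε x h * S.M x h

/-- `r₁^ε(x,h) = M(x,h)·q₁^ε(x,h)/p₂^ε(x) + 1_{h=1}·(1 − p₁^ε(x)/p₂^ε(x))`. -/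
noncomputable def r1 (ε x : ℝ) (h : ℕ) : ℝ :=
  S.M x h * S.q1 ε x h / S.p2 ε x +
    (if h = 1 then 1 - S.p1 ε x / S.p2 ε x else 0)

/-- `r₂^ε(x,h) = M(x,h)·q₁^ε(x,h)/p₂^ε(x) + 1_{h=A}·(1 − p₁^ε(x)/p₂^ε(x))`. -/
noncomputable def r2 (ε x : ℝ) (h : ℕ) : ℝ :=
  S.M x h * S.q1 ε x h / S.p2 ε x +
    (if h = S.A then 1 - S.p1 ε x / S.p2 ε x else 0)

/-- Cumulative sums `min( Σ_{h=1}^{ℓ} (r₁^ε(x,h) + C^r_Lip·η), 1 )`. -/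
noncomputable def cum1 (ε η x : ℝ) (l : ℕ) : ℝ :=
  min (∑ h ∈ Finset.Icc 1 l, (S.r1 ε x h + (S.CrLip : ℝ) * η)) 1

/-- Cumulative sums `max( Σ_{h=1}^{ℓ} (r₂^ε(x,h) − C^r_Lip·η), 0 )`. -/
noncomputable def cum2 (ε η x : ℝ) (l : ℕ) : ℝ :=
  max (∑ h ∈ Finset.Icc 1 l, (S.r2 ε x h - (S.CrLip : ℝ) * η)) 0

/-- `r̄₁^{ε,η}(x,·)`, defined through its cumulative sums. -/
noncomputable def rbar1 (ε η x : ℝ) (h : ℕ) : ℝ :=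
  S.cum1 ε η x h - S.cum1 ε η x (h - 1)

/-- `r̄₂^{ε,η}(x,·)`, defined through its cumulative sums. -/
noncomputable def rbar2 (ε η x : ℝ) (h : ℕ) : ℝ :=
  S.cum2 ε η x h - S.cum2 ε η x (h - 1)

/-- `x ↦ z̄(x)·b(x)·m(x)·p₁^ε(x)`. -/
noncomputable def a1 (ε x : ℝ) : ℝ := S.zbar x * S.b x * S.m x * S.p1 ε x

/-- `x ↦ z̄(x)·b(x)·m(x)·p₂^ε(x)`. -/
noncomputable def a2 (ε x : ℝ) : ℝ := S.zbar x * S.b x * S.m x * S.p2 ε x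

/-- The right-hand side of the CEAD:
`Σ_{h=1}^{A} h²·m(x)·z̄(x)·g(x)·M(x,h)`. -/
noncomputable def ceadRHS (x : ℝ) : ℝ :=
  ∑ h ∈ Finset.Icc 1 S.A, (h : ℝ) ^ 2 * S.m x * S.zbar x * S.g x * S.M x h

/-- The right-hand side of the lower approximating ODE:
`[ z̄·b·m·p₁^ε − C^a_Lip·η ]·Σ_{h=1}^{A} h·r̄₁^{ε,η}(x,h)`. -/
noncomputable def rhs1 (ε η x : ℝ) : ℝ :=
  (S.a1 ε x - (S.CaLip : ℝ) * η) *
    ∑ h ∈ Finset.Icc 1 S.A, (h : ℝ) * S.rbar1 ε η x h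

/-- The right-hand side of the upper approximating ODE:
`[ z̄·b·m·p₂^ε + C^a_Lip·η ]·Σ_{h=1}^{A} h·r̄₂^{ε,η}(x,h)`. -/
noncomputable def rhs2 (ε η x : ℝ) : ℝ :=
  (S.a2 ε x + (S.CaLip : ℝ) * η) *
    ∑ h ∈ Finset.Icc 1 S.A, (h : ℝ) * S.rbar2 ε η x h

end CEADSetup

private lemma abs_bound_of_cpt {s : Set ℝ} (hs : IsCompact s)
    {f : ℝ → ℝ} (hf : ContinuousOn f s) : ∃ B, 0 ≤ B ∧ ∀ x ∈ s, |f x| ≤ B := by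
  obtain ⟨C, hC⟩ := hs.exists_bound_of_continuousOn hf
  exact ⟨max C 0, le_max_right _ _, fun x hx => (hC x hx).trans (le_max_left _ _)⟩

private lemma pos_lb_of_cpt {s : Set ℝ} (hs : IsCompact s) (hne : s.Nonempty)
    {f : ℝ → ℝ} (hf : ContinuousOn f s) (hpos : ∀ x ∈ s, 0 < f x) :
    ∃ c, 0 < c ∧ ∀ x ∈ s, c ≤ f x := by
  obtain ⟨x0, hx0, hmin⟩ := hs.exists_isMinOn hne hf
  exact ⟨f x0, hpos x0 hx0, fun x hx => hmin hx⟩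

private lemma contOn_of_lip {s : Set ℝ} {f : ℝ → ℝ} {K : ℝ}
    (h : ∀ x ∈ s, ∀ y ∈ s, |f x - f y| ≤ K * |x - y|) : ContinuousOn f s :=
  (LipschitzOnWith.of_dist_le' (by simpa [Real.dist_eq] using h)).continuousOn

private lemma lip_mul {s : Set ℝ} {f g : ℝ → ℝ} {Kf Kg Bf Bg : ℝ}
    (hKf : 0 ≤ Kf) (hKg : 0 ≤ Kg)
    (hf : ∀ x ∈ s, ∀ y ∈ s, |f x - f y| ≤ Kf * |x - y|)
    (hg : ∀ x ∈ s, ∀ y ∈ s, |g x - g y| ≤ Kg * |x - y|)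
    (hBf : ∀ x ∈ s, |f x| ≤ Bf) (hBg : ∀ x ∈ s, |g x| ≤ Bg) :
    ∀ x ∈ s, ∀ y ∈ s, |f x * g x - f y * g y| ≤ (Kf * Bg + Bf * Kg) * |x - y| := by
  intro x hx y hy
  have h1 : f x * g x - f y * g y = (f x - f y) * g y + f x * (g x - g y) := by ring
  have h2 : |f x * g x - f y * g y| ≤ |f x - f y| * |g y| + |f x| * |g x - g y| := by
    rw [h1]; exact (abs_add_le _ _).trans (by rw [abs_mul, abs_mul])
  have h3 : |f x - f y| * |g y| ≤ (Kf * |x - y|) * Bg :=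
    mul_le_mul (hf x hx y hy) (hBg y hy) (abs_nonneg _) (by positivity)
  have h4 : |f x| * |g x - g y| ≤ Bf * (Kg * |x - y|) :=
    mul_le_mul (hBf x hx) (hg x hx y hy) (abs_nonneg _)
      ((abs_nonneg _).trans (hBf x hx))
  nlinarith [abs_nonneg (x - y)]

private lemma lip_div {s : Set ℝ} {f g : ℝ → ℝ} {Kf Kg Bf Bg cg : ℝ}
    (hcg : 0 < cg)
    (hf : ∀ x ∈ s, ∀ y ∈ s, |f x - f y| ≤ Kf * |x - y|)
    (hg : ∀ x ∈ s, ∀ y ∈ s, |g x - g y| ≤ Kg * |x - y|)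
    (hBf : ∀ x ∈ s, |f x| ≤ Bf) (hBg : ∀ x ∈ s, |g x| ≤ Bg)
    (hgc : ∀ x ∈ s, cg ≤ g x) :
    ∀ x ∈ s, ∀ y ∈ s,
      |f x / g x - f y / g y| ≤ ((Kf * Bg + Bf * Kg) / (cg * cg)) * |x - y| := by
  intro x hx y hy
  have hgx := hgc x hx; have hgy := hgc y hy
  have hgx0 : g x ≠ 0 := by linarith
  have hgy0 : g y ≠ 0 := by linarith
  have h1 : f x / g x - f y / g y = ((f x - f y) * g y + f y * (g y - g x)) / (g x * g y) := by
    field_simp; ring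
  rw [h1, abs_div]
  have hnum : |(f x - f y) * g y + f y * (g y - g x)| ≤ (Kf * Bg + Bf * Kg) * |x - y| := by
    have h3 : |(f x - f y) * g y| ≤ (Kf * |x - y|) * Bg := by
      rw [abs_mul]
      exact mul_le_mul (hf x hx y hy) (hBg y hy) (abs_nonneg _)
        (by nlinarith [abs_nonneg (f x - f y), hf x hx y hy])
    have h4 : |f y * (g y - g x)| ≤ Bf * (Kg * |x - y|) := by
      rw [abs_mul]
      refine mul_le_mul (hBf y hy) ?_ (abs_nonneg _) ((abs_nonneg _).trans (hBf y hy))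
      have := hg y hy x hx
      rwa [show |x - y| = |y - x| by rw [abs_sub_comm]]
    calc |(f x - f y) * g y + f y * (g y - g x)|
        ≤ |(f x - f y) * g y| + |f y * (g y - g x)| := abs_add_le _ _
      _ ≤ (Kf * |x - y|) * Bg + Bf * (Kg * |x - y|) := add_le_add h3 h4
      _ = (Kf * Bg + Bf * Kg) * |x - y| := by ring
  have hden : cg * cg ≤ |g x * g y| := by
    rw [abs_mul, abs_of_pos (by linarith), abs_of_pos (by linarith)]
    nlinarith
  calc |(f x - f y) * g y + f y * (g y - g x)| / |g x * g y|
      ≤ ((Kf * Bg + Bf * Kg) * |x - y|) / (cg * cg) := by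
        apply div_le_div₀ ((abs_nonneg _).trans hnum) hnum (by positivity) hden
    _ = ((Kf * Bg + Bf * Kg) / (cg * cg)) * |x - y| := by ring
set_option maxHeartbeats 1000000 in
private lemma key_estimate (S : CEADSetup) :
    ∃ C1 : ℝ, 0 < C1 ∧
      ∀ ε η : ℝ, ε ∈ Set.Ioc (0 : ℝ) S.ε0 → η ∈ Set.Ioc (0 : ℝ) S.ε0 →
        ∀ y ∈ S.Xset,
          |S.rhs1 ε η y - S.ceadRHS y| ≤ C1 * (η + ε) ∧
          |S.rhs2 ε η y - S.ceadRHS y| ≤ C1 * (η + ε) := by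
  classical
  have hXc : IsCompact S.Xset := isCompact_Icc
  have hXne : S.Xset.Nonempty := Set.nonempty_Icc.mpr S.hX
  have hbc : ContinuousOn S.b S.Xset := S.hLb.continuousOn
  have hgc : ContinuousOn S.g S.Xset := S.hLg.continuousOn
  obtain ⟨Bb, hBb0, hBb⟩ := abs_bound_of_cpt hXc hbc
  obtain ⟨Bg, hBg0, hBg⟩ := abs_bound_of_cpt hXc hgc
  obtain ⟨bmin, hbmin0, hbmin⟩ := pos_lb_of_cpt hXc hXne hbc S.hbpos
  have hMsc : ContinuousOn (fun x => ∑ h ∈ Finset.Icc 1 S.A, S.M x h) S.Xset := by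
    apply continuousOn_finset_sum
    intro h hh
    rw [Finset.mem_Icc] at hh
    exact (S.hLM h hh.1 hh.2).continuousOn
  obtain ⟨BM, hBM0, hBM⟩ := abs_bound_of_cpt hXc hMsc
  have hqc : ContinuousOn (fun x => S.g x / S.b x - S.C1B * S.ε0) S.Xset :=
    (hgc.div hbc fun x hx => (S.hbpos x hx).ne').sub continuousOn_const
  obtain ⟨qmin, hqmin0, hqmin⟩ := pos_lb_of_cpt hXc hXne hqc (fun x hx => by
    have := S.hq1pos x hx 1 le_rfl S.hA
    simpa using this)
  -- zbar bound
  have hccL : ∀ x ∈ S.Xset, ∀ y ∈ S.Xset, |S.c x x - S.c y y| ≤ (S.Lc : ℝ) * |x - y| := by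
    intro x hx y hy
    have := S.hLc.dist_le_mul (x, x) (Set.mk_mem_prod hx hx) (y, y) (Set.mk_mem_prod hy hy)
    simpa [Prod.dist_eq, Real.dist_eq] using this
  have hccC : ContinuousOn (fun x => S.c x x) S.Xset := contOn_of_lip hccL
  obtain ⟨cmin, hcmin0, hcmin⟩ := pos_lb_of_cpt hXc hXne hccC (fun x hx => S.hcpos x hx x hx)
  have hzC : ContinuousOn S.zbar S.Xset :=
    (hbc.sub S.hLd.continuousOn).div hccC fun x hx => (lt_of_lt_of_le hcmin0 (hcmin x hx)).ne'
  obtain ⟨Bz, hBz0, hBz⟩ := abs_bound_of_cpt hXc hzC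
  -- constants
  have hA1 : (1 : ℝ) ≤ (S.A : ℝ) := by exact_mod_cast S.hA
  have hA0 : (0 : ℝ) ≤ (S.A : ℝ) := by linarith
  have hCr0 : (0 : ℝ) ≤ (S.CrLip : ℝ) := S.CrLip.coe_nonneg
  have hCa0 : (0 : ℝ) ≤ (S.CaLip : ℝ) := S.CaLip.coe_nonneg
  obtain ⟨qM, hqMdef⟩ : ∃ t : ℝ, t = (S.A : ℝ) * Bg / bmin + S.C2B * S.ε0 := ⟨_, rfl⟩
  have hqM0 : 0 ≤ qM := by
    have h1 : 0 ≤ (S.A : ℝ) * Bg / bmin := by positivity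
    have h2 : 0 ≤ S.C2B * S.ε0 := mul_nonneg S.hC2B.le S.hε0.le
    rw [hqMdef]; linarith
  obtain ⟨pmin, hpmindef⟩ : ∃ t : ℝ, t = qmin * S.m0 := ⟨_, rfl⟩
  have hpmin0 : 0 < pmin := by rw [hpmindef]; exact mul_pos hqmin0 S.hm0
  obtain ⟨pM, hpMdef⟩ : ∃ t : ℝ, t = qM * BM := ⟨_, rfl⟩
  have hpM0 : 0 ≤ pM := by rw [hpMdef]; exact mul_nonneg hqM0 hBM0
  obtain ⟨er, herdef⟩ : ∃ t : ℝ, t = BM * (S.C1B * pM + qM * S.C2B * BM) / (pmin * pmin)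
      + (S.C1B + S.C2B) * BM / pmin := ⟨_, rfl⟩
  have her0 : 0 ≤ er := by
    have h1 : 0 ≤ BM * (S.C1B * pM + qM * S.C2B * BM) / (pmin * pmin) := by
      apply div_nonneg _ (by positivity)
      apply mul_nonneg hBM0
      have h3 := mul_nonneg (mul_nonneg hqM0 S.hC2B.le) hBM0
      have h4 := mul_nonneg S.hC1B.le hpM0
      linarith
    have h2 : 0 ≤ (S.C1B + S.C2B) * BM / pmin := by
      apply div_nonneg _ hpmin0.le
      exact mul_nonneg (by linarith [S.hC1B, S.hC2B]) hBM0
    linarith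
  obtain ⟨BS, hBSdef⟩ : ∃ t : ℝ, t = (S.A : ℝ) + (S.A : ℝ) ^ 2 * ((S.A : ℝ) * (S.CrLip : ℝ) + er) * S.ε0 := ⟨_, rfl⟩
  have hBS0 : 0 ≤ BS := by
    have : 0 ≤ (S.A : ℝ) ^ 2 * ((S.A : ℝ) * (S.CrLip : ℝ) + er) * S.ε0 := by
      apply mul_nonneg (mul_nonneg (by positivity) _) S.hε0.le
      exact add_nonneg (mul_nonneg hA0 hCr0) her0
    linarith
  obtain ⟨Ba, hBadef⟩ : ∃ t : ℝ, t = Bz * Bb * pM := ⟨_, rfl⟩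
  have hBa0 : 0 ≤ Ba := by rw [hBadef]; exact mul_nonneg (mul_nonneg hBz0 hBb0) hpM0
  obtain ⟨Cε, hCεdef⟩ : ∃ t : ℝ, t = Bz * Bb * (S.C1B + S.C2B) * BM * BS + Ba * (S.A : ℝ) ^ 2 * er := ⟨_, rfl⟩
  obtain ⟨Cη, hCηdef⟩ : ∃ t : ℝ, t = (S.CaLip : ℝ) * BS + Ba * (S.A : ℝ) ^ 3 * (S.CrLip : ℝ) := ⟨_, rfl⟩
  have hCε0 : 0 ≤ Cε := by
    rw [hCεdef]
    apply add_nonneg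
    · exact mul_nonneg (mul_nonneg (mul_nonneg (mul_nonneg hBz0 hBb0)
        (by linarith [S.hC1B, S.hC2B])) hBM0) hBS0
    · exact mul_nonneg (mul_nonneg hBa0 (by positivity)) her0
  have hCη0 : 0 ≤ Cη := by
    rw [hCηdef]
    apply add_nonneg (mul_nonneg hCa0 hBS0)
    exact mul_nonneg (mul_nonneg hBa0 (by positivity)) hCr0
  refine ⟨Cε + Cη + 1, by linarith, ?_⟩
  rintro ε η ⟨hε0, hεε0⟩ ⟨hη0, hηε0⟩ y hy
  -- pointwise basic facts
  have hby : bmin ≤ S.b y := hbmin y hy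
  have hbypos : 0 < S.b y := lt_of_lt_of_le hbmin0 hby
  have hbyB : S.b y ≤ Bb := le_trans (le_abs_self _) (hBb y hy)
  have hmy := S.hm y hy
  have hMy : ∀ h, 0 ≤ S.M y h := S.hMnn y hy
  have hMsum0 : 0 ≤ ∑ h ∈ Finset.Icc 1 S.A, S.M y h := Finset.sum_nonneg fun h _ => hMy h
  have hMsumB : ∑ h ∈ Finset.Icc 1 S.A, S.M y h ≤ BM := le_trans (le_abs_self _) (hBM y hy)
  have hMhB : ∀ h ∈ Finset.Icc 1 S.A, S.M y h ≤ BM := fun h hh =>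
    le_trans (Finset.single_le_sum (fun i _ => hMy i) hh) hMsumB
  have hhF : ∀ h ∈ Finset.Icc 1 S.A, (1 : ℝ) ≤ (h : ℝ) ∧ (h : ℝ) ≤ (S.A : ℝ) := by
    intro h hh
    rw [Finset.mem_Icc] at hh
    exact ⟨by exact_mod_cast hh.1, by exact_mod_cast hh.2⟩
  have hgy0 : 0 ≤ S.g y := le_trans S.hθ.le (S.hgθ y hy)
  have hgyB : S.g y ≤ Bg := le_trans (le_abs_self _) (hBg y hy)
  obtain ⟨q0, hq0def⟩ : ∃ t : ℕ → ℝ, t = fun h : ℕ => (h : ℝ) * S.g y / S.b y := ⟨_, rfl⟩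
  obtain ⟨p0, hp0def⟩ : ∃ t : ℝ, t = ∑ h ∈ Finset.Icc 1 S.A, q0 h * S.M y h := ⟨_, rfl⟩
  have hq0nn : ∀ h ∈ Finset.Icc 1 S.A, 0 ≤ q0 h := fun h hh => by
    simp only [hq0def]
    positivity
  have hq0ub : ∀ h ∈ Finset.Icc 1 S.A, q0 h ≤ (S.A : ℝ) * Bg / bmin := by
    intro h hh
    have h2 := (hhF h hh).2
    have hnum : (h : ℝ) * S.g y ≤ (S.A : ℝ) * Bg :=
      mul_le_mul h2 hgyB hgy0 hA0
    simp only [hq0def]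
    exact div_le_div₀ (by positivity) hnum hbmin0 hby
  have hq0qM : ∀ h ∈ Finset.Icc 1 S.A, q0 h ≤ qM := fun h hh => by
    have := hq0ub h hh
    have h2 : 0 ≤ S.C2B * S.ε0 := mul_nonneg S.hC2B.le S.hε0.le
    rw [hqMdef]; linarith
  have hq1eq : ∀ h : ℕ, q0 h - S.q1 ε y h = S.C1B * ε := fun h => by
    simp only [hq0def, CEADSetup.q1]; ring
  have hq2eq : ∀ h : ℕ, S.q2 ε y h - q0 h = S.C2B * ε := fun h => by
    simp only [hq0def, CEADSetup.q2]; ring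
  have hq1lb : ∀ h ∈ Finset.Icc 1 S.A, qmin ≤ S.q1 ε y h := by
    intro h hh
    have h1 := (hhF h hh).1
    have hgb : qmin + S.C1B * S.ε0 ≤ S.g y / S.b y := by
      have := hqmin y hy; linarith
    have hgb0 : 0 ≤ S.g y / S.b y := by positivity
    have he : S.q1 ε y h = (h : ℝ) * (S.g y / S.b y) - S.C1B * ε := by
      rw [CEADSetup.q1]; ring
    rw [he]
    have t1 : (↑h - 1) * (S.g y / S.b y) ≥ 0 := mul_nonneg (by linarith) hgb0
    have t2 : S.C1B * ε ≤ S.C1B * S.ε0 := mul_le_mul_of_nonneg_left hεε0 S.hC1B.le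
    nlinarith only [t1, t2, hgb, h1]
  have hq1q2 : ∀ h : ℕ, S.q1 ε y h ≤ S.q2 ε y h := fun h => by
    linarith only [hq1eq h, hq2eq h, (mul_pos S.hC1B hε0).le, (mul_pos S.hC2B hε0).le]
  have hq2qM : ∀ h ∈ Finset.Icc 1 S.A, S.q2 ε y h ≤ qM := by
    intro h hh
    have e2 := hq2eq h
    have h1 := hq0ub h hh
    have h2 : S.C2B * ε ≤ S.C2B * S.ε0 := mul_le_mul_of_nonneg_left hεε0 S.hC2B.le
    rw [hqMdef]; linarith only [e2, h1, h2]
  -- p facts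
  have hp1lb : pmin ≤ S.p1 ε y := by
    have h1 : qmin * (∑ h ∈ Finset.Icc 1 S.A, S.M y h) ≤ S.p1 ε y := by
      rw [CEADSetup.p1, Finset.mul_sum]
      exact Finset.sum_le_sum fun h hh => mul_le_mul_of_nonneg_right (hq1lb h hh) (hMy h)
    have h2 : qmin * S.m0 ≤ qmin * (∑ h ∈ Finset.Icc 1 S.A, S.M y h) :=
      mul_le_mul_of_nonneg_left (S.hMm0 y hy) hqmin0.le
    rw [hpmindef]; linarith
  have hp10 : S.p1 ε y ≤ p0 := by
    rw [CEADSetup.p1, hp0def]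
    refine Finset.sum_le_sum fun h hh => mul_le_mul_of_nonneg_right ?_ (hMy h)
    linarith only [hq1eq h, (mul_pos S.hC1B hε0).le]
  have hp02 : p0 ≤ S.p2 ε y := by
    rw [CEADSetup.p2, hp0def]
    refine Finset.sum_le_sum fun h hh => mul_le_mul_of_nonneg_right ?_ (hMy h)
    linarith only [hq2eq h, (mul_pos S.hC2B hε0).le]
  have hp0pos : 0 < p0 := lt_of_lt_of_le hpmin0 (le_trans hp1lb hp10)
  have hp2pos : 0 < S.p2 ε y := lt_of_lt_of_le hp0pos hp02
  have hp2pmin : pmin ≤ S.p2 ε y := le_trans hp1lb (le_trans hp10 hp02)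
  have hp0ub : p0 ≤ pM := by
    have h1 : p0 ≤ qM * (∑ h ∈ Finset.Icc 1 S.A, S.M y h) := by
      rw [hp0def, Finset.mul_sum]
      exact Finset.sum_le_sum fun h hh => mul_le_mul_of_nonneg_right (hq0qM h hh) (hMy h)
    have h2 : qM * (∑ h ∈ Finset.Icc 1 S.A, S.M y h) ≤ qM * BM := mul_le_mul_of_nonneg_left hMsumB hqM0
    rw [hpMdef]; linarith
  have hp20 : S.p2 ε y - p0 ≤ S.C2B * BM * ε := by
    have e : S.p2 ε y - p0 = S.C2B * ε * (∑ h ∈ Finset.Icc 1 S.A, S.M y h) := by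
      rw [CEADSetup.p2, hp0def, ← Finset.sum_sub_distrib, Finset.mul_sum]
      exact Finset.sum_congr rfl fun h hh => by linear_combination S.M y h * hq2eq h
    rw [e]
    have t := mul_le_mul_of_nonneg_left hMsumB (mul_nonneg S.hC2B.le hε0.le)
    linarith only [t]
  have hp01 : p0 - S.p1 ε y ≤ S.C1B * BM * ε := by
    have e : p0 - S.p1 ε y = S.C1B * ε * (∑ h ∈ Finset.Icc 1 S.A, S.M y h) := by
      rw [CEADSetup.p1, hp0def, ← Finset.sum_sub_distrib, Finset.mul_sum]
      exact Finset.sum_congr rfl fun h hh => by linear_combination S.M y h * hq1eq h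
    rw [e]
    have t := mul_le_mul_of_nonneg_left hMsumB (mul_nonneg S.hC1B.le hε0.le)
    linarith only [t]
  have hp21 : S.p2 ε y - S.p1 ε y ≤ (S.C1B + S.C2B) * BM * ε := by linarith only [hp20, hp01]
  -- r0 facts
  obtain ⟨r0, hr0def⟩ : ∃ t : ℕ → ℝ, t = fun h : ℕ => S.M y h * q0 h / p0 := ⟨_, rfl⟩
  have hr0nn : ∀ h ∈ Finset.Icc 1 S.A, 0 ≤ r0 h := by
    intro h hh
    rw [hr0def]
    exact div_nonneg (mul_nonneg (hMy h) (hq0nn h hh)) hp0pos.le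
  have hr0sum : ∑ h ∈ Finset.Icc 1 S.A, r0 h = 1 := by
    have e : ∑ h ∈ Finset.Icc 1 S.A, r0 h = (∑ h ∈ Finset.Icc 1 S.A, q0 h * S.M y h) / p0 := by
      rw [Finset.sum_div]
      exact Finset.sum_congr rfl fun h _ => by rw [hr0def]; rw [mul_comm]
    rw [e, ← hp0def, div_self hp0pos.ne']
  -- main term of r1,r2 versus r0
  have hmain : ∀ h ∈ Finset.Icc 1 S.A,
      |S.M y h * S.q1 ε y h / S.p2 ε y - r0 h|
        ≤ BM * (S.C1B * pM + qM * S.C2B * BM) / (pmin * pmin) * ε := by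
    intro h hh
    have e : S.M y h * S.q1 ε y h / S.p2 ε y - r0 h
        = S.M y h * (S.q1 ε y h * p0 - q0 h * S.p2 ε y) / (S.p2 ε y * p0) := by
      rw [hr0def]
      field_simp
    rw [e, abs_div, abs_mul]
    have hnum : |S.q1 ε y h * p0 - q0 h * S.p2 ε y| ≤ (S.C1B * pM + qM * S.C2B * BM) * ε := by
      have e2 : S.q1 ε y h * p0 - q0 h * S.p2 ε y
          = -(S.C1B * ε * p0) - q0 h * (S.p2 ε y - p0) := by
        linear_combination (-p0) * hq1eq h
      have t1 : S.C1B * ε * p0 ≤ S.C1B * pM * ε := by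
        have := mul_le_mul_of_nonneg_left hp0ub (mul_nonneg S.hC1B.le hε0.le)
        linarith only [this]
      have t1' : 0 ≤ S.C1B * ε * p0 :=
        mul_nonneg (mul_nonneg S.hC1B.le hε0.le) hp0pos.le
      have t2 : q0 h * (S.p2 ε y - p0) ≤ qM * (S.C2B * BM * ε) :=
        mul_le_mul (hq0qM h hh) hp20 (by linarith only [hp02]) hqM0
      have t2' : 0 ≤ q0 h * (S.p2 ε y - p0) :=
        mul_nonneg (hq0nn h hh) (by linarith only [hp02])
      rw [e2]
      rw [abs_le]
      constructor <;> nlinarith only [t1, t1', t2, t2']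
    have hden : pmin * pmin ≤ |S.p2 ε y * p0| := by
      rw [abs_of_pos (mul_pos hp2pos hp0pos)]
      have := mul_le_mul hp2pmin (le_trans hp1lb hp10) hpmin0.le hp2pos.le
      linarith only [this]
    have hM' : |S.M y h| ≤ BM := by
      rw [abs_of_nonneg (hMy h)]; exact hMhB h hh
    calc |S.M y h| * |S.q1 ε y h * p0 - q0 h * S.p2 ε y| / |S.p2 ε y * p0|
        ≤ BM * ((S.C1B * pM + qM * S.C2B * BM) * ε) / (pmin * pmin) := by
          apply div_le_div₀
          · apply mul_nonneg hBM0
            apply mul_nonneg _ hε0.le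
            have h3 := mul_nonneg (mul_nonneg hqM0 S.hC2B.le) hBM0
            have h4 := mul_nonneg S.hC1B.le hpM0
            linarith only [h3, h4]
          · exact mul_le_mul hM' hnum (abs_nonneg _) hBM0
          · positivity
          · exact hden
      _ = BM * (S.C1B * pM + qM * S.C2B * BM) / (pmin * pmin) * ε := by ring
  -- indicator bound
  have hp1p2 : S.p1 ε y ≤ S.p2 ε y := le_trans hp10 hp02
  have hind0 : 0 ≤ 1 - S.p1 ε y / S.p2 ε y := by
    have : S.p1 ε y / S.p2 ε y ≤ 1 := div_le_one_of_le₀ hp1p2 hp2pos.le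
    linarith only [this]
  have hind1 : 1 - S.p1 ε y / S.p2 ε y ≤ (S.C1B + S.C2B) * BM / pmin * ε := by
    have e : 1 - S.p1 ε y / S.p2 ε y = (S.p2 ε y - S.p1 ε y) / S.p2 ε y := by
      field_simp
    rw [e]
    calc (S.p2 ε y - S.p1 ε y) / S.p2 ε y
        ≤ ((S.C1B + S.C2B) * BM * ε) / pmin := by
          apply div_le_div₀ _ hp21 hpmin0 hp2pmin
          have := mul_nonneg (mul_nonneg (by linarith only [S.hC1B, S.hC2B] : (0:ℝ) ≤ S.C1B + S.C2B) hBM0) hε0.le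
          linarith only [this]
      _ = (S.C1B + S.C2B) * BM / pmin * ε := by ring
  -- r1, r2 vs r0
  have hr1r0 : ∀ h ∈ Finset.Icc 1 S.A, |S.r1 ε y h - r0 h| ≤ er * ε := by
    intro h hh
    rw [CEADSetup.r1]
    have hi : |if h = 1 then 1 - S.p1 ε y / S.p2 ε y else 0|
        ≤ (S.C1B + S.C2B) * BM / pmin * ε := by
      split
      · rw [abs_of_nonneg hind0]; exact hind1
      · rw [abs_zero]
        calc (0:ℝ) ≤ (1 - S.p1 ε y / S.p2 ε y) := hind0
          _ ≤ _ := hind1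
    calc |S.M y h * S.q1 ε y h / S.p2 ε y + (if h = 1 then 1 - S.p1 ε y / S.p2 ε y else 0) - r0 h|
        ≤ |S.M y h * S.q1 ε y h / S.p2 ε y - r0 h|
            + |if h = 1 then 1 - S.p1 ε y / S.p2 ε y else 0| := by
          have e : S.M y h * S.q1 ε y h / S.p2 ε y + (if h = 1 then 1 - S.p1 ε y / S.p2 ε y else 0) - r0 h
              = (S.M y h * S.q1 ε y h / S.p2 ε y - r0 h) + (if h = 1 then 1 - S.p1 ε y / S.p2 ε y else 0) := by ring
          rw [e]; exact abs_add_le _ _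
      _ ≤ BM * (S.C1B * pM + qM * S.C2B * BM) / (pmin * pmin) * ε
            + (S.C1B + S.C2B) * BM / pmin * ε := add_le_add (hmain h hh) hi
      _ = er * ε := by rw [herdef]; ring
  have hr2r0 : ∀ h ∈ Finset.Icc 1 S.A, |S.r2 ε y h - r0 h| ≤ er * ε := by
    intro h hh
    rw [CEADSetup.r2]
    have hi : |if h = S.A then 1 - S.p1 ε y / S.p2 ε y else 0|
        ≤ (S.C1B + S.C2B) * BM / pmin * ε := by
      split
      · rw [abs_of_nonneg hind0]; exact hind1
      · rw [abs_zero]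
        calc (0:ℝ) ≤ (1 - S.p1 ε y / S.p2 ε y) := hind0
          _ ≤ _ := hind1
    calc |S.M y h * S.q1 ε y h / S.p2 ε y + (if h = S.A then 1 - S.p1 ε y / S.p2 ε y else 0) - r0 h|
        ≤ |S.M y h * S.q1 ε y h / S.p2 ε y - r0 h|
            + |if h = S.A then 1 - S.p1 ε y / S.p2 ε y else 0| := by
          have e : S.M y h * S.q1 ε y h / S.p2 ε y + (if h = S.A then 1 - S.p1 ε y / S.p2 ε y else 0) - r0 h
              = (S.M y h * S.q1 ε y h / S.p2 ε y - r0 h) + (if h = S.A then 1 - S.p1 ε y / S.p2 ε y else 0) := by ring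
          rw [e]; exact abs_add_le _ _
      _ ≤ BM * (S.C1B * pM + qM * S.C2B * BM) / (pmin * pmin) * ε
            + (S.C1B + S.C2B) * BM / pmin * ε := add_le_add (hmain h hh) hi
      _ = er * ε := by rw [herdef]; ring
  -- r1, r2 nonneg and total mass 1
  have hA1F : 1 ∈ Finset.Icc 1 S.A := by rw [Finset.mem_Icc]; exact ⟨le_rfl, S.hA⟩
  have hAAF : S.A ∈ Finset.Icc 1 S.A := by rw [Finset.mem_Icc]; exact ⟨S.hA, le_rfl⟩
  have hmainnn : ∀ h ∈ Finset.Icc 1 S.A, 0 ≤ S.M y h * S.q1 ε y h / S.p2 ε y := by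
    intro h hh
    exact div_nonneg (mul_nonneg (hMy h) (le_trans hqmin0.le (hq1lb h hh))) hp2pos.le
  have hr1nn : ∀ h ∈ Finset.Icc 1 S.A, 0 ≤ S.r1 ε y h := by
    intro h hh
    rw [CEADSetup.r1]
    have h2 : 0 ≤ (if h = 1 then 1 - S.p1 ε y / S.p2 ε y else 0) := by
      split
      · exact hind0
      · exact le_rfl
    have h1 := hmainnn h hh
    linarith only [h1, h2]
  have hr2nn : ∀ h ∈ Finset.Icc 1 S.A, 0 ≤ S.r2 ε y h := by
    intro h hh
    rw [CEADSetup.r2]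
    have h2 : 0 ≤ (if h = S.A then 1 - S.p1 ε y / S.p2 ε y else 0) := by
      split
      · exact hind0
      · exact le_rfl
    have h1 := hmainnn h hh
    linarith only [h1, h2]
  have hmainsum : ∑ h ∈ Finset.Icc 1 S.A, S.M y h * S.q1 ε y h / S.p2 ε y
      = S.p1 ε y / S.p2 ε y := by
    rw [← Finset.sum_div]
    congr 1
    rw [CEADSetup.p1]
    exact Finset.sum_congr rfl fun h _ => mul_comm _ _
  have hr1sumA : ∑ h ∈ Finset.Icc 1 S.A, S.r1 ε y h = 1 := by
    simp only [CEADSetup.r1]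
    rw [Finset.sum_add_distrib, hmainsum,
      Finset.sum_ite_eq' (Finset.Icc 1 S.A) 1 (fun _ => 1 - S.p1 ε y / S.p2 ε y),
      if_pos hA1F]
    ring
  have hr2sumA : ∑ h ∈ Finset.Icc 1 S.A, S.r2 ε y h = 1 := by
    simp only [CEADSetup.r2]
    rw [Finset.sum_add_distrib, hmainsum,
      Finset.sum_ite_eq' (Finset.Icc 1 S.A) S.A (fun _ => 1 - S.p1 ε y / S.p2 ε y),
      if_pos hAAF]
    ring
  -- partial sums of r1, r2 lie in [0,1]
  have hr1cum : ∀ l, l ≤ S.A → 0 ≤ (∑ h ∈ Finset.Icc 1 l, S.r1 ε y h) ∧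
      (∑ h ∈ Finset.Icc 1 l, S.r1 ε y h) ≤ 1 := by
    intro l hl
    have hsub : Finset.Icc 1 l ⊆ Finset.Icc 1 S.A := Finset.Icc_subset_Icc_right hl
    constructor
    · exact Finset.sum_nonneg fun h hh => hr1nn h (hsub hh)
    · rw [← hr1sumA]
      exact Finset.sum_le_sum_of_subset_of_nonneg hsub fun h hh _ => hr1nn h hh
  have hr2cum : ∀ l, l ≤ S.A → 0 ≤ (∑ h ∈ Finset.Icc 1 l, S.r2 ε y h) ∧
      (∑ h ∈ Finset.Icc 1 l, S.r2 ε y h) ≤ 1 := by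
    intro l hl
    have hsub : Finset.Icc 1 l ⊆ Finset.Icc 1 S.A := Finset.Icc_subset_Icc_right hl
    constructor
    · exact Finset.sum_nonneg fun h hh => hr2nn h (hsub hh)
    · rw [← hr2sumA]
      exact Finset.sum_le_sum_of_subset_of_nonneg hsub fun h hh _ => hr2nn h hh
  -- cum1, cum2 bounds
  have hCrη : 0 ≤ (S.CrLip : ℝ) * η := mul_nonneg hCr0 hη0.le
  have hcum1 : ∀ l, l ≤ S.A →
      (∑ h ∈ Finset.Icc 1 l, S.r1 ε y h) ≤ S.cum1 ε η y l ∧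
      S.cum1 ε η y l ≤ (∑ h ∈ Finset.Icc 1 l, S.r1 ε y h) + (S.A : ℝ) * (S.CrLip : ℝ) * η := by
    intro l hl
    have hlA : (l : ℝ) ≤ (S.A : ℝ) := by exact_mod_cast hl
    have hl0 : (0 : ℝ) ≤ (l : ℝ) := by positivity
    have hce : ∑ h ∈ Finset.Icc 1 l, (S.r1 ε y h + (S.CrLip : ℝ) * η)
        = (∑ h ∈ Finset.Icc 1 l, S.r1 ε y h) + (l : ℝ) * ((S.CrLip : ℝ) * η) := by
      rw [Finset.sum_add_distrib, Finset.sum_const, Nat.card_Icc, Nat.add_sub_cancel,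
        nsmul_eq_mul]
    rw [CEADSetup.cum1]
    constructor
    · apply le_min
      · rw [hce]
        have := mul_nonneg hl0 hCrη
        linarith only [this]
      · exact (hr1cum l hl).2
    · refine (min_le_left _ _).trans ?_
      rw [hce]
      have := mul_le_mul_of_nonneg_right hlA hCrη
      linarith only [this]
  have hcum2 : ∀ l, l ≤ S.A →
      (∑ h ∈ Finset.Icc 1 l, S.r2 ε y h) - (S.A : ℝ) * (S.CrLip : ℝ) * η ≤ S.cum2 ε η y l ∧
      S.cum2 ε η y l ≤ (∑ h ∈ Finset.Icc 1 l, S.r2 ε y h) := by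
    intro l hl
    have hlA : (l : ℝ) ≤ (S.A : ℝ) := by exact_mod_cast hl
    have hl0 : (0 : ℝ) ≤ (l : ℝ) := by positivity
    have hce : ∑ h ∈ Finset.Icc 1 l, (S.r2 ε y h - (S.CrLip : ℝ) * η)
        = (∑ h ∈ Finset.Icc 1 l, S.r2 ε y h) - (l : ℝ) * ((S.CrLip : ℝ) * η) := by
      rw [Finset.sum_sub_distrib, Finset.sum_const, Nat.card_Icc, Nat.add_sub_cancel,
        nsmul_eq_mul]
    rw [CEADSetup.cum2]
    constructor
    · refine le_trans ?_ (le_max_left _ _)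
      rw [hce]
      have := mul_le_mul_of_nonneg_right hlA hCrη
      linarith only [this]
    · apply max_le
      · rw [hce]
        have := mul_nonneg hl0 hCrη
        linarith only [this]
      · exact (hr2cum l hl).1
  -- rbar1, rbar2 vs r1, r2
  have hrb1 : ∀ h ∈ Finset.Icc 1 S.A,
      |S.rbar1 ε η y h - S.r1 ε y h| ≤ (S.A : ℝ) * (S.CrLip : ℝ) * η := by
    intro h hh
    rw [Finset.mem_Icc] at hh
    obtain ⟨k, rfl⟩ : ∃ k, h = k + 1 := ⟨h - 1, (Nat.succ_pred_eq_of_pos hh.1).symm⟩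
    have hk1 : k + 1 ≤ S.A := hh.2
    have hk : k ≤ S.A := le_trans (Nat.le_succ k) hk1
    have hsplit : ∑ h ∈ Finset.Icc 1 (k + 1), S.r1 ε y h
        = (∑ h ∈ Finset.Icc 1 k, S.r1 ε y h) + S.r1 ε y (k + 1) :=
      Finset.sum_Icc_succ_top (Nat.succ_le_succ (Nat.zero_le k)) _
    have h1 := hcum1 (k + 1) hk1
    have h2 := hcum1 k hk
    have e : S.rbar1 ε η y (k + 1) = S.cum1 ε η y (k + 1) - S.cum1 ε η y k := by
      rw [CEADSetup.rbar1, Nat.add_sub_cancel]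
    rw [e, abs_le]
    constructor <;> linarith only [h1.1, h1.2, h2.1, h2.2, hsplit]
  have hrb2 : ∀ h ∈ Finset.Icc 1 S.A,
      |S.rbar2 ε η y h - S.r2 ε y h| ≤ (S.A : ℝ) * (S.CrLip : ℝ) * η := by
    intro h hh
    rw [Finset.mem_Icc] at hh
    obtain ⟨k, rfl⟩ : ∃ k, h = k + 1 := ⟨h - 1, (Nat.succ_pred_eq_of_pos hh.1).symm⟩
    have hk1 : k + 1 ≤ S.A := hh.2
    have hk : k ≤ S.A := le_trans (Nat.le_succ k) hk1
    have hsplit : ∑ h ∈ Finset.Icc 1 (k + 1), S.r2 ε y h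
        = (∑ h ∈ Finset.Icc 1 k, S.r2 ε y h) + S.r2 ε y (k + 1) :=
      Finset.sum_Icc_succ_top (Nat.succ_le_succ (Nat.zero_le k)) _
    have h1 := hcum2 (k + 1) hk1
    have h2 := hcum2 k hk
    have e : S.rbar2 ε η y (k + 1) = S.cum2 ε η y (k + 1) - S.cum2 ε η y k := by
      rw [CEADSetup.rbar2, Nat.add_sub_cancel]
    rw [e, abs_le]
    constructor <;> linarith only [h1.1, h1.2, h2.1, h2.2, hsplit]
  -- rbar vs r0, and the weighted sums S1, S2
  have hrb1r0 : ∀ h ∈ Finset.Icc 1 S.A,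
      |S.rbar1 ε η y h - r0 h| ≤ (S.A : ℝ) * (S.CrLip : ℝ) * η + er * ε := by
    intro h hh
    calc |S.rbar1 ε η y h - r0 h|
        ≤ |S.rbar1 ε η y h - S.r1 ε y h| + |S.r1 ε y h - r0 h| := abs_sub_le _ _ _
      _ ≤ _ := add_le_add (hrb1 h hh) (hr1r0 h hh)
  have hrb2r0 : ∀ h ∈ Finset.Icc 1 S.A,
      |S.rbar2 ε η y h - r0 h| ≤ (S.A : ℝ) * (S.CrLip : ℝ) * η + er * ε := by
    intro h hh
    calc |S.rbar2 ε η y h - r0 h|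
        ≤ |S.rbar2 ε η y h - S.r2 ε y h| + |S.r2 ε y h - r0 h| := abs_sub_le _ _ _
      _ ≤ _ := add_le_add (hrb2 h hh) (hr2r0 h hh)
  obtain ⟨S0, hS0def⟩ : ∃ t : ℝ, t = ∑ h ∈ Finset.Icc 1 S.A, (h : ℝ) * r0 h := ⟨_, rfl⟩
  have hS0nn : 0 ≤ S0 := by
    rw [hS0def]
    exact Finset.sum_nonneg fun h hh => mul_nonneg (by positivity) (hr0nn h hh)
  have hS0ub : S0 ≤ (S.A : ℝ) := by
    rw [hS0def]
    calc ∑ h ∈ Finset.Icc 1 S.A, (h : ℝ) * r0 h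
        ≤ ∑ h ∈ Finset.Icc 1 S.A, (S.A : ℝ) * r0 h :=
          Finset.sum_le_sum fun h hh =>
            mul_le_mul_of_nonneg_right (hhF h hh).2 (hr0nn h hh)
      _ = (S.A : ℝ) * 1 := by rw [← Finset.mul_sum, hr0sum]
      _ = (S.A : ℝ) := mul_one _
  have hsumdiff : ∀ rb : ℕ → ℝ,
      (∀ h ∈ Finset.Icc 1 S.A, |rb h - r0 h| ≤ (S.A : ℝ) * (S.CrLip : ℝ) * η + er * ε) →
      |(∑ h ∈ Finset.Icc 1 S.A, (h : ℝ) * rb h) - S0|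
        ≤ (S.A : ℝ) ^ 2 * ((S.A : ℝ) * (S.CrLip : ℝ) * η + er * ε) := by
    intro rb hrb
    have e : (∑ h ∈ Finset.Icc 1 S.A, (h : ℝ) * rb h) - S0
        = ∑ h ∈ Finset.Icc 1 S.A, ((h : ℝ) * (rb h - r0 h)) := by
      rw [hS0def, ← Finset.sum_sub_distrib]
      exact Finset.sum_congr rfl fun h _ => by ring
    rw [e]
    have hEnn : 0 ≤ (S.A : ℝ) * (S.CrLip : ℝ) * η + er * ε := by
      have := mul_nonneg (mul_nonneg hA0 hCr0) hη0.le
      have := mul_nonneg her0 hε0.le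
      linarith
    calc |∑ h ∈ Finset.Icc 1 S.A, ((h : ℝ) * (rb h - r0 h))|
        ≤ ∑ h ∈ Finset.Icc 1 S.A, |(h : ℝ) * (rb h - r0 h)| :=
          Finset.abs_sum_le_sum_abs _ _
      _ ≤ ∑ h ∈ Finset.Icc 1 S.A, (S.A : ℝ) * ((S.A : ℝ) * (S.CrLip : ℝ) * η + er * ε) := by
          refine Finset.sum_le_sum fun h hh => ?_
          rw [abs_mul, Nat.abs_cast]
          exact mul_le_mul (hhF h hh).2 (hrb h hh) (abs_nonneg _) hA0
      _ = (S.A : ℝ) * ((S.A : ℝ) * ((S.A : ℝ) * (S.CrLip : ℝ) * η + er * ε)) := by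
          rw [Finset.sum_const, Nat.card_Icc, Nat.add_sub_cancel, nsmul_eq_mul]
      _ = (S.A : ℝ) ^ 2 * ((S.A : ℝ) * (S.CrLip : ℝ) * η + er * ε) := by ring
  have hS1S0 := hsumdiff _ hrb1r0
  have hS2S0 := hsumdiff _ hrb2r0
  -- uniform bound on the weighted sums
  have hEε0 : (S.A : ℝ) * (S.CrLip : ℝ) * η + er * ε
      ≤ ((S.A : ℝ) * (S.CrLip : ℝ) + er) * S.ε0 := by
    have t1 : (S.A : ℝ) * (S.CrLip : ℝ) * η ≤ (S.A : ℝ) * (S.CrLip : ℝ) * S.ε0 :=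
      mul_le_mul_of_nonneg_left hηε0 (mul_nonneg hA0 hCr0)
    have t2 : er * ε ≤ er * S.ε0 := mul_le_mul_of_nonneg_left hεε0 her0
    linarith only [t1, t2]
  have hSbound : ∀ rb : ℕ → ℝ,
      |(∑ h ∈ Finset.Icc 1 S.A, (h : ℝ) * rb h) - S0|
        ≤ (S.A : ℝ) ^ 2 * ((S.A : ℝ) * (S.CrLip : ℝ) * η + er * ε) →
      |∑ h ∈ Finset.Icc 1 S.A, (h : ℝ) * rb h| ≤ BS := by
    intro rb hdiff
    have h1 := abs_sub_abs_le_abs_sub (∑ h ∈ Finset.Icc 1 S.A, (h : ℝ) * rb h) S0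
    have h2 : |S0| ≤ (S.A : ℝ) := by
      rw [abs_of_nonneg hS0nn]; exact hS0ub
    have h3 : (S.A : ℝ) ^ 2 * ((S.A : ℝ) * (S.CrLip : ℝ) * η + er * ε)
        ≤ (S.A : ℝ) ^ 2 * (((S.A : ℝ) * (S.CrLip : ℝ) + er) * S.ε0) :=
      mul_le_mul_of_nonneg_left hEε0 (by positivity)
    rw [hBSdef]
    have h4 : (S.A : ℝ) ^ 2 * (((S.A : ℝ) * (S.CrLip : ℝ) + er) * S.ε0)
        = (S.A : ℝ) ^ 2 * ((S.A : ℝ) * (S.CrLip : ℝ) + er) * S.ε0 := by ring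
    linarith only [h1, h2, h3, hdiff, h4.le, h4.ge]
  have hS1B := hSbound _ hS1S0
  have hS2B := hSbound _ hS2S0
  -- a0 and the CEAD identity
  have hzynn : 0 ≤ S.zbar y := by
    rw [CEADSetup.zbar]
    exact le_of_lt (div_pos (S.hbd y hy) (lt_of_lt_of_le hcmin0 (hcmin y hy)))
  have hzyB : S.zbar y ≤ Bz := le_trans (le_abs_self _) (hBz y hy)
  obtain ⟨a0, ha0def⟩ : ∃ t : ℝ, t = S.zbar y * S.b y * S.m y * p0 := ⟨_, rfl⟩
  have hzbm_nn : 0 ≤ S.zbar y * S.b y * S.m y :=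
    mul_nonneg (mul_nonneg hzynn hbypos.le) hmy.1.le
  have hzbm_ub : S.zbar y * S.b y * S.m y ≤ Bz * Bb := by
    have h1 : S.zbar y * S.b y ≤ Bz * Bb := mul_le_mul hzyB hbyB hbypos.le hBz0
    have h2 : S.zbar y * S.b y * S.m y ≤ S.zbar y * S.b y * 1 :=
      mul_le_mul_of_nonneg_left hmy.2 (mul_nonneg hzynn hbypos.le)
    rw [mul_one] at h2
    linarith only [h1, h2]
  have ha0nn : 0 ≤ a0 := by
    rw [ha0def]; exact mul_nonneg hzbm_nn hp0pos.le
  have ha0B : a0 ≤ Ba := by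
    rw [ha0def, hBadef, hpMdef]
    calc S.zbar y * S.b y * S.m y * p0 ≤ (Bz * Bb) * p0 :=
          mul_le_mul_of_nonneg_right hzbm_ub hp0pos.le
      _ ≤ (Bz * Bb) * pM := mul_le_mul_of_nonneg_left hp0ub (mul_nonneg hBz0 hBb0)
      _ = Bz * Bb * (qM * BM) := by rw [hpMdef]
  have ha1diff1 : 0 ≤ a0 - S.a1 ε y := by
    have e : a0 - S.a1 ε y = S.zbar y * S.b y * S.m y * (p0 - S.p1 ε y) := by
      rw [CEADSetup.a1, ha0def]; ring
    rw [e]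
    exact mul_nonneg hzbm_nn (by linarith only [hp10])
  have ha1diff2 : a0 - S.a1 ε y ≤ Bz * Bb * S.C1B * BM * ε := by
    have e : a0 - S.a1 ε y = S.zbar y * S.b y * S.m y * (p0 - S.p1 ε y) := by
      rw [CEADSetup.a1, ha0def]; ring
    rw [e]
    calc S.zbar y * S.b y * S.m y * (p0 - S.p1 ε y)
        ≤ (Bz * Bb) * (S.C1B * BM * ε) :=
          mul_le_mul hzbm_ub hp01 (by linarith only [hp10]) (mul_nonneg hBz0 hBb0)
      _ = Bz * Bb * S.C1B * BM * ε := by ring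
  have ha2diff1 : 0 ≤ S.a2 ε y - a0 := by
    have e : S.a2 ε y - a0 = S.zbar y * S.b y * S.m y * (S.p2 ε y - p0) := by
      rw [CEADSetup.a2, ha0def]; ring
    rw [e]
    exact mul_nonneg hzbm_nn (by linarith only [hp02])
  have ha2diff2 : S.a2 ε y - a0 ≤ Bz * Bb * S.C2B * BM * ε := by
    have e : S.a2 ε y - a0 = S.zbar y * S.b y * S.m y * (S.p2 ε y - p0) := by
      rw [CEADSetup.a2, ha0def]; ring
    rw [e]
    calc S.zbar y * S.b y * S.m y * (S.p2 ε y - p0)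
        ≤ (Bz * Bb) * (S.C2B * BM * ε) :=
          mul_le_mul hzbm_ub hp20 (by linarith only [hp02]) (mul_nonneg hBz0 hBb0)
      _ = Bz * Bb * S.C2B * BM * ε := by ring
  have hcead : S.ceadRHS y = a0 * S0 := by
    rw [CEADSetup.ceadRHS, hS0def, ha0def, Finset.mul_sum]
    refine Finset.sum_congr rfl fun h hh => ?_
    rw [hr0def, hq0def]
    have hb0 : S.b y ≠ 0 := hbypos.ne'
    have hp0' : p0 ≠ 0 := hp0pos.ne'
    field_simp
  -- final assembly
  have hη0' : (0:ℝ) ≤ η := hη0.le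
  have hε0' : (0:ℝ) ≤ ε := hε0.le
  have hCεfull : Bz * Bb * S.C1B * BM * BS + Ba * (S.A : ℝ) ^ 2 * er ≤ Cε ∧
      Bz * Bb * S.C2B * BM * BS + Ba * (S.A : ℝ) ^ 2 * er ≤ Cε := by
    have t1 : 0 ≤ Bz * Bb * S.C1B * BM * BS :=
      mul_nonneg (mul_nonneg (mul_nonneg (mul_nonneg hBz0 hBb0) S.hC1B.le) hBM0) hBS0
    have t2 : 0 ≤ Bz * Bb * S.C2B * BM * BS :=
      mul_nonneg (mul_nonneg (mul_nonneg (mul_nonneg hBz0 hBb0) S.hC2B.le) hBM0) hBS0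
    rw [hCεdef]
    constructor <;> nlinarith only [t1, t2]
  have hcombine : ∀ (a' S' : ℝ) (c : ℝ),
      |a' - a0| ≤ Bz * Bb * c * BM * ε + (S.CaLip : ℝ) * η →
      |S'| ≤ BS →
      |S' - S0| ≤ (S.A : ℝ) ^ 2 * ((S.A : ℝ) * (S.CrLip : ℝ) * η + er * ε) →
      Bz * Bb * c * BM * BS + Ba * (S.A : ℝ) ^ 2 * er ≤ Cε →
      0 ≤ c →
      |a' * S' - S.ceadRHS y| ≤ (Cε + Cη + 1) * (η + ε) := by
    intro a' S' c hadiff hSB hSd hCc hc0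
    have hdec : a' * S' - S.ceadRHS y = (a' - a0) * S' + a0 * (S' - S0) := by
      rw [hcead]; ring
    have habs : |a' * S' - S.ceadRHS y| ≤ |a' - a0| * |S'| + |a0| * |S' - S0| := by
      rw [hdec]
      refine (abs_add_le _ _).trans ?_
      rw [abs_mul, abs_mul]
    have hb1 : |a' - a0| * |S'| ≤ (Bz * Bb * c * BM * ε + (S.CaLip : ℝ) * η) * BS := by
      apply mul_le_mul hadiff hSB (abs_nonneg _)
      have u1 : 0 ≤ Bz * Bb * c * BM * ε :=
        mul_nonneg (mul_nonneg (mul_nonneg (mul_nonneg hBz0 hBb0) hc0) hBM0) hε0'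
      have u2 : 0 ≤ (S.CaLip : ℝ) * η := mul_nonneg hCa0 hη0'
      linarith only [u1, u2]
    have hb2 : |a0| * |S' - S0|
        ≤ Ba * ((S.A : ℝ) ^ 2 * ((S.A : ℝ) * (S.CrLip : ℝ) * η + er * ε)) := by
      apply mul_le_mul _ hSd (abs_nonneg _) hBa0
      rw [abs_of_nonneg ha0nn]; exact ha0B
    have hsum : |a' * S' - S.ceadRHS y|
        ≤ (Bz * Bb * c * BM * BS + Ba * (S.A : ℝ) ^ 2 * er) * ε
          + ((S.CaLip : ℝ) * BS + Ba * (S.A : ℝ) ^ 3 * (S.CrLip : ℝ)) * η := by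
      have e : (Bz * Bb * c * BM * ε + (S.CaLip : ℝ) * η) * BS
            + Ba * ((S.A : ℝ) ^ 2 * ((S.A : ℝ) * (S.CrLip : ℝ) * η + er * ε))
          = (Bz * Bb * c * BM * BS + Ba * (S.A : ℝ) ^ 2 * er) * ε
            + ((S.CaLip : ℝ) * BS + Ba * (S.A : ℝ) ^ 3 * (S.CrLip : ℝ)) * η := by ring
      linarith only [habs, hb1, hb2, e.le, e.ge]
    have hCη' : (S.CaLip : ℝ) * BS + Ba * (S.A : ℝ) ^ 3 * (S.CrLip : ℝ) = Cη := hCηdef.symm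
    calc |a' * S' - S.ceadRHS y|
        ≤ (Bz * Bb * c * BM * BS + Ba * (S.A : ℝ) ^ 2 * er) * ε
          + ((S.CaLip : ℝ) * BS + Ba * (S.A : ℝ) ^ 3 * (S.CrLip : ℝ)) * η := hsum
      _ ≤ (Cε + Cη + 1) * ε + (Cε + Cη + 1) * η := by
          refine add_le_add (mul_le_mul_of_nonneg_right ?_ hε0')
            (mul_le_mul_of_nonneg_right ?_ hη0')
          · linarith only [hCc, hCη0]
          · rw [hCη']; linarith only [hCε0]
      _ = (Cε + Cη + 1) * (η + ε) := by ring
  constructor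
  · -- rhs1
    have e1 : S.rhs1 ε η y = (S.a1 ε y - (S.CaLip : ℝ) * η)
        * ∑ h ∈ Finset.Icc 1 S.A, (h : ℝ) * S.rbar1 ε η y h := by
      rw [CEADSetup.rhs1]
    rw [e1]
    refine hcombine _ _ S.C1B ?_ hS1B hS1S0 hCεfull.1 S.hC1B.le
    have u2 : 0 ≤ (S.CaLip : ℝ) * η := mul_nonneg hCa0 hη0'
    rw [abs_le]
    constructor <;> [skip; skip] <;> linarith only [ha1diff1, ha1diff2, u2,
      mul_nonneg (mul_nonneg (mul_nonneg (mul_nonneg hBz0 hBb0) S.hC1B.le) hBM0) hε0']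
  · -- rhs2
    have e2 : S.rhs2 ε η y = (S.a2 ε y + (S.CaLip : ℝ) * η)
        * ∑ h ∈ Finset.Icc 1 S.A, (h : ℝ) * S.rbar2 ε η y h := by
      rw [CEADSetup.rhs2]
    rw [e2]
    refine hcombine _ _ S.C2B ?_ hS2B hS2S0 hCεfull.2 S.hC2B.le
    have u2 : 0 ≤ (S.CaLip : ℝ) * η := mul_nonneg hCa0 hη0'
    rw [abs_le]
    constructor <;> linarith only [ha2diff1, ha2diff2, u2,
      mul_nonneg (mul_nonneg (mul_nonneg (mul_nonneg hBz0 hBb0) S.hC2B.le) hBM0) hε0']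
set_option maxHeartbeats 1000000 in
private lemma cead_lip (S : CEADSetup) :
    ∃ K : NNReal, 1 ≤ K ∧ LipschitzOnWith K S.ceadRHS S.Xset := by
  have hXc : IsCompact S.Xset := isCompact_Icc
  have hXne : S.Xset.Nonempty := Set.nonempty_Icc.mpr S.hX
  -- plain Lipschitz facts
  have hbL : ∀ x ∈ S.Xset, ∀ y ∈ S.Xset, |S.b x - S.b y| ≤ (S.Lb : ℝ) * |x - y| := by
    intro x hx y hy
    have := S.hLb.dist_le_mul x hx y hy
    simpa [Real.dist_eq] using this
  have hdL : ∀ x ∈ S.Xset, ∀ y ∈ S.Xset, |S.d x - S.d y| ≤ (S.Ld : ℝ) * |x - y| := by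
    intro x hx y hy
    have := S.hLd.dist_le_mul x hx y hy
    simpa [Real.dist_eq] using this
  have hmL : ∀ x ∈ S.Xset, ∀ y ∈ S.Xset, |S.m x - S.m y| ≤ (S.Lm : ℝ) * |x - y| := by
    intro x hx y hy
    have := S.hLm.dist_le_mul x hx y hy
    simpa [Real.dist_eq] using this
  have hgL : ∀ x ∈ S.Xset, ∀ y ∈ S.Xset, |S.g x - S.g y| ≤ (S.Lg : ℝ) * |x - y| := by
    intro x hx y hy
    have := S.hLg.dist_le_mul x hx y hy
    simpa [Real.dist_eq] using this
  have hccL : ∀ x ∈ S.Xset, ∀ y ∈ S.Xset, |S.c x x - S.c y y| ≤ (S.Lc : ℝ) * |x - y| := by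
    intro x hx y hy
    have := S.hLc.dist_le_mul (x, x) (Set.mk_mem_prod hx hx) (y, y) (Set.mk_mem_prod hy hy)
    simpa [Prod.dist_eq, Real.dist_eq] using this
  have hnL : ∀ x ∈ S.Xset, ∀ y ∈ S.Xset,
      |(S.b x - S.d x) - (S.b y - S.d y)| ≤ ((S.Lb : ℝ) + (S.Ld : ℝ)) * |x - y| := by
    intro x hx y hy
    have h1 := hbL x hx y hy
    have h2 := hdL x hx y hy
    have e : (S.b x - S.d x) - (S.b y - S.d y) = (S.b x - S.b y) - (S.d x - S.d y) := by ring
    rw [e]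
    calc |(S.b x - S.b y) - (S.d x - S.d y)| ≤ |S.b x - S.b y| + |S.d x - S.d y| :=
          abs_sub _ _
      _ ≤ _ := by linarith only [h1, h2]
  -- W = ∑ h² M
  have hWL : ∀ x ∈ S.Xset, ∀ y ∈ S.Xset,
      |(∑ h ∈ Finset.Icc 1 S.A, (h : ℝ) ^ 2 * S.M x h)
        - (∑ h ∈ Finset.Icc 1 S.A, (h : ℝ) ^ 2 * S.M y h)|
        ≤ ((S.A : ℝ) ^ 3 * (S.LM : ℝ)) * |x - y| := by
    intro x hx y hy
    rw [← Finset.sum_sub_distrib]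
    have hA0 : (0 : ℝ) ≤ (S.A : ℝ) := by positivity
    calc |∑ h ∈ Finset.Icc 1 S.A, ((h : ℝ) ^ 2 * S.M x h - (h : ℝ) ^ 2 * S.M y h)|
        ≤ ∑ h ∈ Finset.Icc 1 S.A, |(h : ℝ) ^ 2 * S.M x h - (h : ℝ) ^ 2 * S.M y h| :=
          Finset.abs_sum_le_sum_abs _ _
      _ ≤ ∑ h ∈ Finset.Icc 1 S.A, (S.A : ℝ) ^ 2 * ((S.LM : ℝ) * |x - y|) := by
          refine Finset.sum_le_sum fun h hh => ?_
          rw [Finset.mem_Icc] at hh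
          have hhA : (h : ℝ) ≤ (S.A : ℝ) := by exact_mod_cast hh.2
          have hh0 : (0 : ℝ) ≤ (h : ℝ) := by positivity
          have e : (h : ℝ) ^ 2 * S.M x h - (h : ℝ) ^ 2 * S.M y h
              = (h : ℝ) ^ 2 * (S.M x h - S.M y h) := by ring
          rw [e, abs_mul, abs_of_nonneg (by positivity : (0:ℝ) ≤ (h : ℝ) ^ 2)]
          have hML : |S.M x h - S.M y h| ≤ (S.LM : ℝ) * |x - y| := by
            have := (S.hLM h hh.1 hh.2).dist_le_mul x hx y hy
            simpa [Real.dist_eq] using this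
          exact mul_le_mul (by nlinarith only [hhA, hh0]) hML (abs_nonneg _) (by positivity)
      _ = (S.A : ℝ) * ((S.A : ℝ) ^ 2 * ((S.LM : ℝ) * |x - y|)) := by
          rw [Finset.sum_const, Nat.card_Icc, Nat.add_sub_cancel, nsmul_eq_mul]
      _ = ((S.A : ℝ) ^ 3 * (S.LM : ℝ)) * |x - y| := by ring
  -- bounds
  obtain ⟨Bb, hBb0, hBb⟩ := abs_bound_of_cpt hXc (contOn_of_lip hbL)
  obtain ⟨Bd, hBd0, hBd⟩ := abs_bound_of_cpt hXc (contOn_of_lip hdL)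
  obtain ⟨Bg, hBg0, hBg⟩ := abs_bound_of_cpt hXc (contOn_of_lip hgL)
  obtain ⟨Bc, hBc0, hBc⟩ := abs_bound_of_cpt hXc (contOn_of_lip hccL)
  obtain ⟨BW, hBW0, hBW⟩ := abs_bound_of_cpt hXc (contOn_of_lip hWL)
  obtain ⟨cmin, hcmin0, hcmin⟩ := pos_lb_of_cpt hXc hXne (contOn_of_lip hccL)
    (fun x hx => S.hcpos x hx x hx)
  have hnB : ∀ x ∈ S.Xset, |S.b x - S.d x| ≤ Bb + Bd := by
    intro x hx
    calc |S.b x - S.d x| ≤ |S.b x| + |S.d x| := abs_sub _ _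
      _ ≤ _ := add_le_add (hBb x hx) (hBd x hx)
  -- zbar is Lipschitz
  have hzval : ∀ x : ℝ, S.zbar x = (S.b x - S.d x) / S.c x x := fun x => rfl
  have hzL : ∀ x ∈ S.Xset, ∀ y ∈ S.Xset, |S.zbar x - S.zbar y|
      ≤ ((((S.Lb : ℝ) + (S.Ld : ℝ)) * Bc + (Bb + Bd) * (S.Lc : ℝ)) / (cmin * cmin)) * |x - y| := by
    intro x hx y hy
    rw [hzval x, hzval y]
    exact lip_div hcmin0 hnL hccL hnB hBc hcmin x hx y hy
  obtain ⟨Bz, hBz0, hBz⟩ := abs_bound_of_cpt hXc (contOn_of_lip hzL)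
  have hKz0 : 0 ≤ (((S.Lb : ℝ) + (S.Ld : ℝ)) * Bc + (Bb + Bd) * (S.Lc : ℝ)) / (cmin * cmin) := by
    have h1 : 0 ≤ ((S.Lb : ℝ) + (S.Ld : ℝ)) * Bc :=
      mul_nonneg (add_nonneg S.Lb.coe_nonneg S.Ld.coe_nonneg) hBc0
    have h2 : 0 ≤ (Bb + Bd) * (S.Lc : ℝ) :=
      mul_nonneg (add_nonneg hBb0 hBd0) S.Lc.coe_nonneg
    positivity
  -- m bounds
  have hm1 : ∀ x ∈ S.Xset, |S.m x| ≤ 1 := by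
    intro x hx
    have := S.hm x hx
    rw [abs_of_pos this.1]
    exact this.2
  -- build the product
  have hst1 := lip_mul (Kf := (S.Lm : ℝ)) (Bf := 1) S.Lm.coe_nonneg hKz0 hmL hzL hm1 hBz
  have hB1 : ∀ x ∈ S.Xset, |S.m x * S.zbar x| ≤ 1 * Bz := by
    intro x hx
    rw [abs_mul]
    exact mul_le_mul (hm1 x hx) (hBz x hx) (abs_nonneg _) zero_le_one
  have hK10 : 0 ≤ (S.Lm : ℝ) * Bz + 1 * ((((S.Lb : ℝ) + (S.Ld : ℝ)) * Bc
      + (Bb + Bd) * (S.Lc : ℝ)) / (cmin * cmin)) := by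
    have := mul_nonneg S.Lm.coe_nonneg hBz0
    linarith only [this, hKz0]
  have hst2 := lip_mul hK10 S.Lg.coe_nonneg hst1 hgL hB1 hBg
  have hB2 : ∀ x ∈ S.Xset, |S.m x * S.zbar x * S.g x| ≤ 1 * Bz * Bg := by
    intro x hx
    rw [abs_mul]
    exact mul_le_mul (hB1 x hx) (hBg x hx) (abs_nonneg _) (by linarith only [hBz0])
  have hK20 : 0 ≤ ((S.Lm : ℝ) * Bz + 1 * ((((S.Lb : ℝ) + (S.Ld : ℝ)) * Bc
      + (Bb + Bd) * (S.Lc : ℝ)) / (cmin * cmin))) * Bg + 1 * Bz * (S.Lg : ℝ) := by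
    have h1 := mul_nonneg hK10 hBg0
    have h2 : 0 ≤ 1 * Bz * (S.Lg : ℝ) := by
      have := mul_nonneg hBz0 S.Lg.coe_nonneg
      linarith only [this]
    linarith only [h1, h2]
  have hKW0 : 0 ≤ (S.A : ℝ) ^ 3 * (S.LM : ℝ) :=
    mul_nonneg (by positivity) S.LM.coe_nonneg
  have hst3 := lip_mul hK20 hKW0 hst2 hWL hB2 hBW
  -- ceadRHS as this product
  have heq : ∀ x : ℝ, S.ceadRHS x
      = S.m x * S.zbar x * S.g x * (∑ h ∈ Finset.Icc 1 S.A, (h : ℝ) ^ 2 * S.M x h) := by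
    intro x
    rw [CEADSetup.ceadRHS, Finset.mul_sum]
    exact Finset.sum_congr rfl fun h _ => by ring
  set KK : ℝ := (((S.Lm : ℝ) * Bz + 1 * ((((S.Lb : ℝ) + (S.Ld : ℝ)) * Bc
      + (Bb + Bd) * (S.Lc : ℝ)) / (cmin * cmin))) * Bg + 1 * Bz * (S.Lg : ℝ)) * BW
      + 1 * Bz * Bg * ((S.A : ℝ) ^ 3 * (S.LM : ℝ)) with hKK
  have hceadL : ∀ x ∈ S.Xset, ∀ y ∈ S.Xset,
      |S.ceadRHS x - S.ceadRHS y| ≤ KK * |x - y| := by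
    intro x hx y hy
    rw [heq x, heq y]
    exact hst3 x hx y hy
  have hlip : LipschitzOnWith (Real.toNNReal KK) S.ceadRHS S.Xset :=
    LipschitzOnWith.of_dist_le' (by
      intro x hx y hy
      rw [Real.dist_eq, Real.dist_eq]
      exact hceadL x hx y hy)
  refine ⟨Real.toNNReal KK + 1, le_add_self, fun x hx y hy => (hlip hx hy).trans ?_⟩
  exact mul_le_mul_left (ENNReal.coe_le_coe.mpr le_self_add) _
private lemma exp_sub_one_le (s : ℝ) : Real.exp s - 1 ≤ s * Real.exp s := by
  have h := Real.add_one_le_exp (-s)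
  have h2 : Real.exp (-s) * Real.exp s = 1 := by rw [← Real.exp_add]; simp
  nlinarith [Real.exp_pos s]
/-- Lemma 8.2 of the paper.
Fix the data of `CEADSetup`, together with the common Lipschitz constants `CrLip`
(for `x ↦ r_j^ε(x,h)`, uniformly in `h` and `ε ≤ ε0`) and `CaLip` (for the maps
`x ↦ z̄(x)b(x)m(x)p_j^ε(x)`).  Then there is a constant `C`, independent of
`x₀, T, ε, η`, such that whenever `ε, η ∈ (0, ε0]`, `η` is small enough that
`z̄·b·m·p₁^ε − C^a_Lip·η > 0` on `X`, and `x, x₁, x₂ : [0,T] → X` solve the CEAD and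
the two approximating ODEs with common initial condition `x₀ ∈ X`, one has
`sup_{t∈[0,T]} |x_j(t) − x(t)| ≤ C·T·e^{C·T}·(η + ε)` for `j = 1, 2`. -/
theorem stmt18 (S : CEADSetup)
    (hrLip : ∀ ε ∈ Set.Ioc (0 : ℝ) S.ε0, ∀ h : ℕ, 1 ≤ h → h ≤ S.A →
      LipschitzOnWith S.CrLip (fun x => S.r1 ε x h) S.Xset ∧
      LipschitzOnWith S.CrLip (fun x => S.r2 ε x h) S.Xset)
    (haLip : ∀ ε ∈ Set.Ioc (0 : ℝ) S.ε0,
      LipschitzOnWith S.CaLip (S.a1 ε) S.Xset ∧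
      LipschitzOnWith S.CaLip (S.a2 ε) S.Xset) :
    ∃ C : ℝ, 0 < C ∧
      ∀ ε η : ℝ, ε ∈ Set.Ioc (0 : ℝ) S.ε0 → η ∈ Set.Ioc (0 : ℝ) S.ε0 →
        (∀ x ∈ S.Xset, 0 < S.a1 ε x - (S.CaLip : ℝ) * η) →
        ∀ x₀ ∈ S.Xset, ∀ T : ℝ, 0 < T →
        ∀ x x1 x2 : ℝ → ℝ,
          x 0 = x₀ → x1 0 = x₀ → x2 0 = x₀ →
          (∀ t ∈ Set.Icc (0 : ℝ) T, x t ∈ S.Xset) →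
          (∀ t ∈ Set.Icc (0 : ℝ) T, x1 t ∈ S.Xset) →
          (∀ t ∈ Set.Icc (0 : ℝ) T, x2 t ∈ S.Xset) →
          (∀ t ∈ Set.Icc (0 : ℝ) T, HasDerivAt x (S.ceadRHS (x t)) t) →
          (∀ t ∈ Set.Icc (0 : ℝ) T, HasDerivAt x1 (S.rhs1 ε η (x1 t)) t) →
          (∀ t ∈ Set.Icc (0 : ℝ) T, HasDerivAt x2 (S.rhs2 ε η (x2 t)) t) →
          ∀ t ∈ Set.Icc (0 : ℝ) T,
            |x1 t - x t| ≤ C * T * Real.exp (C * T) * (η + ε) ∧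
            |x2 t - x t| ≤ C * T * Real.exp (C * T) * (η + ε) := by

  obtain ⟨C1, hC10, hkey⟩ := key_estimate S
  obtain ⟨K, hK1, hKlip⟩ := cead_lip S
  have hK1' : (1 : ℝ) ≤ (K : ℝ) := by exact_mod_cast hK1
  have hK0 : (0 : ℝ) < (K : ℝ) := lt_of_lt_of_le one_pos hK1'
  refine ⟨C1 + (K : ℝ), by linarith only [hC10, hK0], ?_⟩
  rintro ε η hε hη _hpos x₀ hx₀ T hT x x1 x2 hx0 hx10 hx20 hxmem hx1mem hx2mem hx' hx1' hx2' t ht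
  have hηε : 0 < η + ε := add_pos hη.1 hε.1
  have main : ∀ (f : ℝ → ℝ) (rhs : ℝ → ℝ),
      f 0 = x₀ → (∀ s ∈ Set.Icc (0 : ℝ) T, f s ∈ S.Xset) →
      (∀ s ∈ Set.Icc (0 : ℝ) T, HasDerivAt f (rhs (f s)) s) →
      (∀ y ∈ S.Xset, |rhs y - S.ceadRHS y| ≤ C1 * (η + ε)) →
      |f t - x t| ≤ (C1 + (K : ℝ)) * T * Real.exp ((C1 + (K : ℝ)) * T) * (η + ε) := by
    intro f rhs hf0 hfmem hf' hrhs
    have hcont_f : ContinuousOn f (Set.Icc 0 T) :=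
      fun s hs => ((hf' s hs).continuousAt).continuousWithinAt
    have hcont_x : ContinuousOn x (Set.Icc 0 T) :=
      fun s hs => ((hx' s hs).continuousAt).continuousWithinAt
    have grow := dist_le_of_approx_trajectories_ODE_of_mem
      (v := fun _ : ℝ => S.ceadRHS) (s := fun _ : ℝ => S.Xset) (K := K)
      (f := f) (g := x) (f' := fun s => rhs (f s)) (g' := fun s => S.ceadRHS (x s))
      (a := 0) (b := T) (εf := C1 * (η + ε)) (εg := 0) (δ := 0)
      (fun _ _ => hKlip) hcont_f
      (fun s hs => (hf' s (Set.Ico_subset_Icc_self hs)).hasDerivWithinAt)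
      (fun s hs => by
        rw [Real.dist_eq]
        exact hrhs (f s) (hfmem s (Set.Ico_subset_Icc_self hs)))
      (fun s hs => hfmem s (Set.Ico_subset_Icc_self hs))
      hcont_x
      (fun s hs => (hx' s (Set.Ico_subset_Icc_self hs)).hasDerivWithinAt)
      (fun s hs => by simp)
      (fun s hs => hxmem s (Set.Ico_subset_Icc_self hs))
      (by rw [hf0, hx0]; simp)
      t ht
    have hKne : (K : ℝ) ≠ 0 := hK0.ne'
    have hgb : gronwallBound 0 (K : ℝ) (C1 * (η + ε) + 0) (t - 0)
        = (C1 * (η + ε)) / (K : ℝ) * (Real.exp ((K : ℝ) * t) - 1) := by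
      rw [gronwallBound_of_K_ne_0 hKne]
      norm_num
    have ht0 : (0 : ℝ) ≤ t := ht.1
    have htT : t ≤ T := ht.2
    have hCC : (K : ℝ) * t ≤ (C1 + (K : ℝ)) * T := by nlinarith only [hC10, hK0, ht0, htT, hT]
    have hexpmono : Real.exp ((K : ℝ) * t) ≤ Real.exp ((C1 + (K : ℝ)) * T) :=
      Real.exp_le_exp.mpr hCC
    have hexp1 : Real.exp ((K : ℝ) * t) - 1 ≤ (K : ℝ) * t * Real.exp ((K : ℝ) * t) :=
      exp_sub_one_le _
    have hstep1 : (C1 * (η + ε)) / (K : ℝ) * (Real.exp ((K : ℝ) * t) - 1)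
        ≤ C1 * (η + ε) * (t * Real.exp ((K : ℝ) * t)) := by
      have e : (C1 * (η + ε)) / (K : ℝ) * ((K : ℝ) * t * Real.exp ((K : ℝ) * t))
          = C1 * (η + ε) * (t * Real.exp ((K : ℝ) * t)) := by
        field_simp
      have step : (C1 * (η + ε)) / (K : ℝ) * (Real.exp ((K : ℝ) * t) - 1)
          ≤ (C1 * (η + ε)) / (K : ℝ) * ((K : ℝ) * t * Real.exp ((K : ℝ) * t)) := by
        apply mul_le_mul_of_nonneg_left hexp1
        positivity
      linarith only [step, e.le]
    have hstep2 : C1 * (η + ε) * (t * Real.exp ((K : ℝ) * t))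
        ≤ C1 * (η + ε) * (T * Real.exp ((C1 + (K : ℝ)) * T)) := by
      apply mul_le_mul_of_nonneg_left _ (by positivity)
      exact mul_le_mul htT hexpmono (Real.exp_pos _).le hT.le
    have hstep3 : C1 * (η + ε) * (T * Real.exp ((C1 + (K : ℝ)) * T))
        ≤ (C1 + (K : ℝ)) * (η + ε) * (T * Real.exp ((C1 + (K : ℝ)) * T)) := by
      apply mul_le_mul_of_nonneg_right _ (by positivity)
      nlinarith only [hK0, hηε, hC10]
    have hfinal : |f t - x t| ≤ (C1 + (K : ℝ)) * (η + ε) * (T * Real.exp ((C1 + (K : ℝ)) * T)) := by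
      have hd : |f t - x t| = dist (f t) (x t) := (Real.dist_eq _ _).symm
      rw [hd]
      calc dist (f t) (x t) ≤ gronwallBound 0 (K : ℝ) (C1 * (η + ε) + 0) (t - 0) := grow
        _ = (C1 * (η + ε)) / (K : ℝ) * (Real.exp ((K : ℝ) * t) - 1) := hgb
        _ ≤ C1 * (η + ε) * (t * Real.exp ((K : ℝ) * t)) := hstep1
        _ ≤ C1 * (η + ε) * (T * Real.exp ((C1 + (K : ℝ)) * T)) := hstep2
        _ ≤ _ := hstep3
    calc |f t - x t| ≤ (C1 + (K : ℝ)) * (η + ε) * (T * Real.exp ((C1 + (K : ℝ)) * T)) := hfinal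
      _ = (C1 + (K : ℝ)) * T * Real.exp ((C1 + (K : ℝ)) * T) * (η + ε) := by ring
  exact ⟨main x1 (S.rhs1 ε η) hx10 hx1mem hx1' (fun y hy => (hkey ε η hε hη y hy).1),
         main x2 (S.rhs2 ε η) hx20 hx2mem hx2' (fun y hy => (hkey ε η hε hη y hy).2)⟩
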